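/- arXiv:2007.03476 — 4 statements merged into one kernel-verified Lean document; each statement's English description precedes it below -/
import Mathlib

section
/- For any group G acting on itself by conjugation, there is a group homomorphism κ : G ⊗ G → [G,G] (the commutator subgroup) with κ(g ⊗ h) = [g,h] = g h g⁻¹ h⁻¹ for all g, h ∈ G. -/
/-- Defining relations of the nonabelian tensor square `G ⊗ G`
(conjugation actions, left convention `ᵍx = g x g⁻¹`). -/
def tensorRels (G : Type*) [Group G] : Set (FreeGroup (G × G)) :=
  { r | (∃ g g' h : G, r = FreeGroup.of (g * g', h) *
          (FreeGroup.of (g * g' * g⁻¹, g * h * g⁻¹) * FreeGroup.of (g, h))⁻¹) ∨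
        (∃ g h h' : G, r = FreeGroup.of (g, h * h') *
          (FreeGroup.of (g, h) * FreeGroup.of (h * g * h⁻¹, h * h' * h⁻¹))⁻¹) }

/-- The nonabelian tensor square `G ⊗ G`. -/
def TensorSquare (G : Type*) [Group G] := PresentedGroup (tensorRels G)

instance (G : Type*) [Group G] : Group (TensorSquare G) := by
  unfold TensorSquare; infer_instance

/-- The generator `g ⊗ h` of `G ⊗ G`. -/
def tensorOf {G : Type*} [Group G] (g h : G) : TensorSquare G := PresentedGroup.of (g, h)

/-- The set of elements `x ⊗ x` generating `∇(G)`. -/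
def nablaSet (G : Type*) [Group G] : Set (TensorSquare G) := { t | ∃ x : G, t = tensorOf x x }

/-- The exterior square `G ∧ G = (G ⊗ G)/∇(G)`. -/
def ExtSquare (G : Type*) [Group G] :=
  TensorSquare G ⧸ Subgroup.normalClosure (nablaSet G)

instance (G : Type*) [Group G] : Group (ExtSquare G) := by
  unfold ExtSquare; infer_instance

/-- The element `g ∧ h` of `G ∧ G`. -/
def wedge {G : Type*} [Group G] (g h : G) : ExtSquare G := QuotientGroup.mk (tensorOf g h)

/-- `M₀(G) ≤ G ∧ G`: the subgroup generated by `x ∧ y` with `[x,y] = 1`. -/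
def M0 (G : Type*) [Group G] : Subgroup (ExtSquare G) :=
  Subgroup.closure { t | ∃ x y : G, x * y = y * x ∧ t = wedge x y }

open scoped commutatorElement in
private def kappaFun {G : Type*} [Group G] (p : G × G) : commutator G :=
  ⟨p.1 * p.2 * p.1⁻¹ * p.2⁻¹, by
    have : ⁅p.1, p.2⁆ ∈ commutator G :=
      Subgroup.commutator_mem_commutator (Subgroup.mem_top _) (Subgroup.mem_top _)
    simpa [commutatorElement_def, mul_assoc] using this⟩

/-- There is a group homomorphism `κ : G ⊗ G → [G,G]` with `κ(g ⊗ h) = g h g⁻¹ h⁻¹`. -/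
theorem exists_kappa_tensor (G : Type*) [Group G] :
    ∃ κ : TensorSquare G →* (commutator G), ∀ g h : G,
      (κ (tensorOf g h) : G) = g * h * g⁻¹ * h⁻¹ := by
  have hrel : ∀ r ∈ tensorRels G, FreeGroup.lift (kappaFun (G := G)) r = 1 := by
    rintro r (⟨g, g', h, rfl⟩ | ⟨g, h, h', rfl⟩) <;>
      · simp only [map_mul, map_inv, FreeGroup.lift_apply_of]
        apply mul_inv_eq_one.mpr
        apply Subtype.ext
        simp only [kappaFun, Subgroup.coe_mul, MulMemClass.mk_mul_mk]
        group
  refine ⟨PresentedGroup.toGroup hrel, fun g h => ?_⟩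
  have : PresentedGroup.toGroup hrel (tensorOf g h) = kappaFun (g, h) :=
    PresentedGroup.toGroup.of hrel
  exact congrArg Subtype.val this
end

section
/- Let G be a finite group with exterior square G ∧ G, Schur multiplier M(G) = ker(κ : G ∧ G → [G,G]), and let M₀(G) ≤ M(G) be the subgroup generated by all x ∧ y with x, y ∈ G commuting. If M(G) = M₀(G) (i.e., the Bogomolov multiplier B₀(G) = M(G)/M₀(G) is trivial), then the exponent of M(G) divides the exponent of G. -/
section Aux
variable {G : Type*} [Group G]

lemma tensor_rel_eq_one {r : FreeGroup (G × G)} (hr : r ∈ tensorRels G) :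
    PresentedGroup.mk (tensorRels G) r = (1 : TensorSquare G) :=
  (QuotientGroup.eq_one_iff r).mpr (Subgroup.subset_normalClosure hr)

lemma tensor_rel1 (g g' h : G) :
    tensorOf (g * g') h = tensorOf (g * g' * g⁻¹) (g * h * g⁻¹) * tensorOf g h := by
  have := tensor_rel_eq_one (G := G) (Or.inl ⟨g, g', h, rfl⟩)
  rw [map_mul, map_inv, map_mul] at this
  exact mul_inv_eq_one.mp this

lemma tensor_rel2 (g h h' : G) :
    tensorOf g (h * h') = tensorOf g h * tensorOf (h * g * h⁻¹) (h * h' * h⁻¹) := by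
  have := tensor_rel_eq_one (G := G) (Or.inr ⟨g, h, h', rfl⟩)
  rw [map_mul, map_inv, map_mul] at this
  exact mul_inv_eq_one.mp this

/-- The quotient map `TensorSquare G → ExtSquare G` as a hom. -/
def extMk : TensorSquare G →* ExtSquare G :=
  QuotientGroup.mk' (Subgroup.normalClosure (nablaSet G))

lemma wedge_eq (g h : G) : wedge g h = extMk (tensorOf g h) := rfl

lemma wedge_rel1 (g g' h : G) :
    wedge (g * g') h = wedge (g * g' * g⁻¹) (g * h * g⁻¹) * wedge g h := by
  rw [wedge_eq, wedge_eq, wedge_eq, ← map_mul, tensor_rel1]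

lemma wedge_rel2 (g h h' : G) :
    wedge g (h * h') = wedge g h * wedge (h * g * h⁻¹) (h * h' * h⁻¹) := by
  rw [wedge_eq, wedge_eq, wedge_eq, ← map_mul, tensor_rel2]

lemma wedge_one_left (h : G) : wedge 1 h = 1 := by
  have := wedge_rel1 (1 : G) 1 h
  simp only [mul_one, one_mul, inv_one] at this
  exact (right_eq_mul.mp this)

/-- Cancellation identity derived from expanding `w(gg', hh')` two ways. -/
lemma wedge_cancel (g h g' h' : G) :
    wedge (g*h*g'*(g*h)⁻¹) (g*h*h'*(g*h)⁻¹) * wedge g h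
      = wedge g h * wedge (h*g*g'*(h*g)⁻¹) (h*g*h'*(h*g)⁻¹) := by
  have wayA : wedge (g*g') (h*h')
      = wedge (g*g'*g⁻¹) (g*h*g⁻¹)
        * wedge (g*h*g'*(g*h)⁻¹) (g*h*h'*(g*h)⁻¹)
        * wedge g h * wedge (h*g*h⁻¹) (h*h'*h⁻¹) := by
    rw [wedge_rel1 g g' (h*h'), wedge_rel2 g h h']
    rw [show g*(h*h')*g⁻¹ = (g*h*g⁻¹) * (g*h'*g⁻¹) by group]
    rw [wedge_rel2 (g*g'*g⁻¹) (g*h*g⁻¹) (g*h'*g⁻¹)]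
    rw [show (g*h*g⁻¹)*(g*g'*g⁻¹)*(g*h*g⁻¹)⁻¹ = g*h*g'*(g*h)⁻¹ by group]
    rw [show (g*h*g⁻¹)*(g*h'*g⁻¹)*(g*h*g⁻¹)⁻¹ = g*h*h'*(g*h)⁻¹ by group]
    group
  have wayB : wedge (g*g') (h*h')
      = wedge (g*g'*g⁻¹) (g*h*g⁻¹) * wedge g h
        * wedge (h*g*g'*(h*g)⁻¹) (h*g*h'*(h*g)⁻¹)
        * wedge (h*g*h⁻¹) (h*h'*h⁻¹) := by
    rw [wedge_rel2 (g*g') h h', wedge_rel1 g g' h]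
    rw [show h*(g*g')*h⁻¹ = (h*g*h⁻¹) * (h*g'*h⁻¹) by group]
    rw [wedge_rel1 (h*g*h⁻¹) (h*g'*h⁻¹) (h*h'*h⁻¹)]
    rw [show (h*g*h⁻¹)*(h*g'*h⁻¹)*(h*g*h⁻¹)⁻¹ = h*g*g'*(h*g)⁻¹ by group]
    rw [show (h*g*h⁻¹)*(h*h'*h⁻¹)*(h*g*h⁻¹)⁻¹ = h*g*h'*(h*g)⁻¹ by group]
    group
  have key := wayA.symm.trans wayB
  simp only [mul_assoc] at key
  have h3 := mul_left_cancel key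
  simp only [← mul_assoc] at h3
  exact mul_right_cancel h3

/-- Conjugation by a generator acts diagonally by the commutator. -/
lemma wedge_conj (g h a b : G) :
    wedge g h * wedge a b * (wedge g h)⁻¹
      = wedge ((g*h*g⁻¹*h⁻¹) * a * (g*h*g⁻¹*h⁻¹)⁻¹) ((g*h*g⁻¹*h⁻¹) * b * (g*h*g⁻¹*h⁻¹)⁻¹) := by
  have := wedge_cancel g h ((h*g)⁻¹ * a * (h*g)) ((h*g)⁻¹ * b * (h*g))
  rw [show h*g*((h*g)⁻¹*a*(h*g))*(h*g)⁻¹ = a by group] at this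
  rw [show h*g*((h*g)⁻¹*b*(h*g))*(h*g)⁻¹ = b by group] at this
  rw [show g*h*((h*g)⁻¹*a*(h*g))*(g*h)⁻¹ = (g*h*g⁻¹*h⁻¹)*a*(g*h*g⁻¹*h⁻¹)⁻¹ by group] at this
  rw [show g*h*((h*g)⁻¹*b*(h*g))*(g*h)⁻¹ = (g*h*g⁻¹*h⁻¹)*b*(g*h*g⁻¹*h⁻¹)⁻¹ by group] at this
  rw [← this]
  group

lemma ext_generated (s : ExtSquare G) :
    s ∈ Subgroup.closure { t : ExtSquare G | ∃ g h : G, t = wedge g h } := by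
  obtain ⟨t, rfl⟩ : ∃ t : TensorSquare G, extMk t = s := QuotientGroup.mk'_surjective _ s
  have : t ∈ (Subgroup.closure { t : ExtSquare G | ∃ g h : G, t = wedge g h }).comap extMk := by
    refine PresentedGroup.generated_by _ _ (fun j => ?_) t
    exact Subgroup.subset_closure ⟨j.1, j.2, rfl⟩
  exact this

lemma wedge_conj_all (κ : ExtSquare G →* G)
    (hκ : ∀ g h : G, κ (wedge g h) = g * h * g⁻¹ * h⁻¹) (t : ExtSquare G) :
    ∀ a b : G, t * wedge a b * t⁻¹ = wedge (κ t * a * (κ t)⁻¹) (κ t * b * (κ t)⁻¹) := by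
  induction ext_generated t using Subgroup.closure_induction with
  | mem x hx =>
    intro a b
    obtain ⟨g, h, rfl⟩ := hx
    rw [wedge_conj, hκ]
  | one => simp
  | mul x y hx hy px py =>
    intro a b
    have h1 : x * y * wedge a b * (x * y)⁻¹ = x * (y * wedge a b * y⁻¹) * x⁻¹ := by group
    rw [h1, py a b, px (κ y * a * (κ y)⁻¹) (κ y * b * (κ y)⁻¹), map_mul]
    congr 1 <;> group
  | inv x hx px =>
    intro a b
    have h2 := px (κ x⁻¹ * a * (κ x⁻¹)⁻¹) (κ x⁻¹ * b * (κ x⁻¹)⁻¹)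
    rw [show κ x * (κ x⁻¹ * a * (κ x⁻¹)⁻¹) * (κ x)⁻¹ = a by rw [map_inv]; group,
        show κ x * (κ x⁻¹ * b * (κ x⁻¹)⁻¹) * (κ x)⁻¹ = b by rw [map_inv]; group] at h2
    rw [← h2]; group

lemma mem_center_of_ker (κ : ExtSquare G →* G)
    (hκ : ∀ g h : G, κ (wedge g h) = g * h * g⁻¹ * h⁻¹) {t : ExtSquare G} (ht : t ∈ κ.ker) :
    t ∈ Subgroup.center (ExtSquare G) := by
  rw [Subgroup.mem_center_iff]
  intro s
  induction ext_generated s using Subgroup.closure_induction with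
  | mem x hx =>
    obtain ⟨g, h, rfl⟩ := hx
    have hcj := wedge_conj_all κ hκ t g h
    rw [MonoidHom.mem_ker.mp ht] at hcj
    simp only [one_mul, inv_one, mul_one] at hcj
    exact (mul_inv_eq_iff_eq_mul.mp hcj).symm
  | one => simp
  | mul x y _ _ px py => rw [mul_assoc, py, ← mul_assoc, px, mul_assoc]
  | inv x _ px =>
    calc x⁻¹ * t = x⁻¹ * (t * x) * x⁻¹ := by group
    _ = x⁻¹ * (x * t) * x⁻¹ := by rw [px]
    _ = t * x⁻¹ := by group

lemma wedge_pow_of_comm {x y : G} (hxy : x * y = y * x) (n : ℕ) :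
    (wedge x y) ^ n = wedge (x ^ n) y := by
  induction n with
  | zero => simp [wedge_one_left]
  | succ n ih =>
    rw [pow_succ, ih, show x ^ (n+1) = x * x ^ n from pow_succ' x n,
      wedge_rel1 x (x^n) y,
      show x * x ^ n * x⁻¹ = x ^ n by
        rw [← pow_succ', pow_succ, mul_inv_cancel_right],
      show x * y * x⁻¹ = y by rw [hxy, mul_inv_cancel_right]]

end Aux

/-- If the Bogomolov multiplier is trivial, i.e. `M(G) = M₀(G)`, then
`exp(M(G)) ∣ exp(G)` for a finite group `G`. -/
theorem exponent_schurMultiplier_dvd_of_bogomolov_trivial (G : Type*) [Group G] [Finite G]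
    (κ : ExtSquare G →* G) (hκ : ∀ g h : G, κ (wedge g h) = g * h * g⁻¹ * h⁻¹)
    (htrivial : κ.ker = M0 G) :
    Monoid.exponent κ.ker ∣ Monoid.exponent G := by
  set n := Monoid.exponent G with hn
  apply Monoid.exponent_dvd_of_forall_pow_eq_one
  rintro ⟨t, ht⟩
  have key : ∀ s ∈ M0 G, s ∈ Subgroup.center (ExtSquare G) ∧ s ^ n = 1 := by
    intro s hs
    induction hs using Subgroup.closure_induction with
    | mem x hx =>
      obtain ⟨a, b, hab, rfl⟩ := hx
      constructor
      · apply mem_center_of_ker κ hκ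
        rw [MonoidHom.mem_ker, hκ]
        rw [hab]; group
      · rw [wedge_pow_of_comm hab, hn, Monoid.pow_exponent_eq_one, wedge_one_left]
    | one => exact ⟨Subgroup.one_mem _, one_pow n⟩
    | mul x y _ _ px py =>
      refine ⟨Subgroup.mul_mem _ px.1 py.1, ?_⟩
      have hc : Commute x y := (Subgroup.mem_center_iff.mp px.1 y).symm
      rw [hc.mul_pow, px.2, py.2, one_mul]
    | inv x _ px =>
      exact ⟨Subgroup.inv_mem _ px.1, by rw [inv_pow, px.2, inv_one]⟩
  have hp := (key t (htrivial ▸ ht)).2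
  ext
  push_cast
  exact hp
end

section
/- If G is a finite p-group of nilpotency class at most 2 and p is odd, then exp(G ∧ G) divides exp(G), and consequently exp(M(G)) divides exp(G). -/
namespace ExpAux

variable {G : Type*} [Group G]

def piE (G : Type*) [Group G] : FreeGroup (G × G) →* ExtSquare G :=
  (QuotientGroup.mk' (Subgroup.normalClosure (nablaSet G))).comp
    (QuotientGroup.mk' (Subgroup.normalClosure (tensorRels G)))

lemma piE_surjective (G : Type*) [Group G] : Function.Surjective (piE G) :=
  (QuotientGroup.mk'_surjective _).comp (QuotientGroup.mk'_surjective _)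

lemma piE_of (g h : G) : piE G (FreeGroup.of (g, h)) = wedge g h := rfl

lemma rel_one {r : FreeGroup (G × G)} (hr : r ∈ tensorRels G) : piE G r = 1 := by
  have h1 : (QuotientGroup.mk' (Subgroup.normalClosure (tensorRels G))) r = 1 :=
    (QuotientGroup.eq_one_iff r).2 (Subgroup.subset_normalClosure hr)
  show (QuotientGroup.mk' (Subgroup.normalClosure (nablaSet G)))
      ((QuotientGroup.mk' (Subgroup.normalClosure (tensorRels G))) r) = 1
  rw [h1]; exact map_one _

lemma L1 (g g' h : G) :
    wedge (g * g') h = wedge (g * g' * g⁻¹) (g * h * g⁻¹) * wedge g h := by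
  have h1 := rel_one (G := G) (Or.inl ⟨g, g', h, rfl⟩)
  rw [map_mul, map_inv, map_mul, piE_of, piE_of, piE_of, mul_inv_eq_one] at h1
  exact h1

lemma L2 (g h h' : G) :
    wedge g (h * h') = wedge g h * wedge (h * g * h⁻¹) (h * h' * h⁻¹) := by
  have h1 := rel_one (G := G) (Or.inr ⟨g, h, h', rfl⟩)
  rw [map_mul, map_inv, map_mul, piE_of, piE_of, piE_of, mul_inv_eq_one] at h1
  exact h1

section Class2

variable (hc : ∀ u x : G, u * x * u⁻¹ * x⁻¹ ∈ Subgroup.center G)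

lemma central_conj {z : G} (hz : z ∈ Subgroup.center G) (t : G) : z * t * z⁻¹ = t := by
  have h := Subgroup.mem_center_iff.mp hz t
  rw [← h, mul_inv_cancel_right]

lemma central_conj' {z : G} (hz : z ∈ Subgroup.center G) (x : G) : x * z * x⁻¹ = z := by
  rw [Subgroup.mem_center_iff.mp hz x, mul_inv_cancel_right]

lemma central_mul_conj {z : G} (hz : z ∈ Subgroup.center G) (m x : G) :
    (z * m) * x * (z * m)⁻¹ = m * x * m⁻¹ := by
  have h : (z * m) * x * (z * m)⁻¹ = z * (m * x * m⁻¹) * z⁻¹ := by group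
  rw [h, central_conj hz]

include hc in
lemma conj_swap (u h x : G) : (h * u) * x * (h * u)⁻¹ = (u * h) * x * (u * h)⁻¹ := by
  have e : h * u = (h * u * h⁻¹ * u⁻¹) * (u * h) := by group
  calc (h * u) * x * (h * u)⁻¹
      = ((h * u * h⁻¹ * u⁻¹) * (u * h)) * x * ((h * u * h⁻¹ * u⁻¹) * (u * h))⁻¹ := by rw [← e]
    _ = (u * h) * x * (u * h)⁻¹ := central_mul_conj (hc h u) _ _

lemma C1 {z : G} (hz : z ∈ Subgroup.center G) (v y : G) :
    wedge (z * v) y = wedge v y * wedge z y := by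
  have h := L1 z v y
  rwa [central_conj hz, central_conj hz] at h

lemma C2 {z : G} (hz : z ∈ Subgroup.center G) (u y : G) :
    wedge u (z * y) = wedge u z * wedge u y := by
  have h := L2 u z y
  rwa [central_conj hz, central_conj hz] at h

lemma wedge_one_left (y : G) : wedge (1 : G) y = 1 := by
  have h := C1 (Subgroup.one_mem _) (1 : G) y
  rw [mul_one] at h
  exact mul_left_cancel (a := wedge (1:G) y) (by rw [mul_one, ← h])

lemma wedge_one_right (u : G) : wedge u (1 : G) = 1 := by
  have h := C2 (Subgroup.one_mem _) u (1 : G)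
  rw [mul_one] at h
  exact mul_left_cancel (a := wedge u (1:G)) (by rw [mul_one, ← h])

include hc in
lemma wedge_mul_comm (p q u h : G) :
    wedge p q * wedge u h = wedge u h * wedge p q := by
  have key : ∀ v y : G,
      wedge ((u*h)*v*(u*h)⁻¹) ((u*h)*y*(u*h)⁻¹) * wedge u h
        = wedge u h * wedge ((u*h)*v*(u*h)⁻¹) ((u*h)*y*(u*h)⁻¹) := by
    intro v y
    have A : wedge (u*v) (h*y)
        = wedge (u*v*u⁻¹) (u*h*u⁻¹) *
          wedge ((u*h)*v*(u*h)⁻¹) ((u*h)*y*(u*h)⁻¹) *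
          wedge u h * wedge (h*u*h⁻¹) (h*y*h⁻¹) := by
      calc wedge (u*v) (h*y)
          = wedge (u*v*u⁻¹) (u*(h*y)*u⁻¹) * wedge u (h*y) := L1 u v (h*y)
        _ = wedge (u*v*u⁻¹) ((u*h*u⁻¹)*(u*y*u⁻¹)) * wedge u (h*y) := by
            rw [show u*(h*y)*u⁻¹ = (u*h*u⁻¹)*(u*y*u⁻¹) from by group]
        _ = (wedge (u*v*u⁻¹) (u*h*u⁻¹) *
              wedge ((u*h*u⁻¹)*(u*v*u⁻¹)*(u*h*u⁻¹)⁻¹) ((u*h*u⁻¹)*(u*y*u⁻¹)*(u*h*u⁻¹)⁻¹)) *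
            (wedge u h * wedge (h*u*h⁻¹) (h*y*h⁻¹)) := by
            rw [L2 (u*v*u⁻¹) (u*h*u⁻¹) (u*y*u⁻¹), L2 u h y]
        _ = wedge (u*v*u⁻¹) (u*h*u⁻¹) *
            wedge ((u*h)*v*(u*h)⁻¹) ((u*h)*y*(u*h)⁻¹) *
            wedge u h * wedge (h*u*h⁻¹) (h*y*h⁻¹) := by
            rw [show (u*h*u⁻¹)*(u*v*u⁻¹)*(u*h*u⁻¹)⁻¹ = (u*h)*v*(u*h)⁻¹ from by group,
              show (u*h*u⁻¹)*(u*y*u⁻¹)*(u*h*u⁻¹)⁻¹ = (u*h)*y*(u*h)⁻¹ from by group]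
            simp only [mul_assoc]
    have B : wedge (u*v) (h*y)
        = wedge (u*v*u⁻¹) (u*h*u⁻¹) *
          wedge u h *
          wedge ((u*h)*v*(u*h)⁻¹) ((u*h)*y*(u*h)⁻¹) * wedge (h*u*h⁻¹) (h*y*h⁻¹) := by
      calc wedge (u*v) (h*y)
          = wedge (u*v) h * wedge (h*(u*v)*h⁻¹) (h*y*h⁻¹) := L2 (u*v) h y
        _ = (wedge (u*v*u⁻¹) (u*h*u⁻¹) * wedge u h) *
            wedge ((h*u*h⁻¹)*(h*v*h⁻¹)) (h*y*h⁻¹) := by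
            rw [L1 u v h, show h*(u*v)*h⁻¹ = (h*u*h⁻¹)*(h*v*h⁻¹) from by group]
        _ = (wedge (u*v*u⁻¹) (u*h*u⁻¹) * wedge u h) *
            (wedge ((h*u*h⁻¹)*(h*v*h⁻¹)*(h*u*h⁻¹)⁻¹) ((h*u*h⁻¹)*(h*y*h⁻¹)*(h*u*h⁻¹)⁻¹) *
              wedge (h*u*h⁻¹) (h*y*h⁻¹)) := by
            rw [L1 (h*u*h⁻¹) (h*v*h⁻¹) (h*y*h⁻¹)]
        _ = wedge (u*v*u⁻¹) (u*h*u⁻¹) *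
            wedge u h *
            wedge ((u*h)*v*(u*h)⁻¹) ((u*h)*y*(u*h)⁻¹) * wedge (h*u*h⁻¹) (h*y*h⁻¹) := by
            rw [show (h*u*h⁻¹)*(h*v*h⁻¹)*(h*u*h⁻¹)⁻¹ = (h*u)*v*(h*u)⁻¹ from by group,
              show (h*u*h⁻¹)*(h*y*h⁻¹)*(h*u*h⁻¹)⁻¹ = (h*u)*y*(h*u)⁻¹ from by group,
              conj_swap hc u h v, conj_swap hc u h y]
            simp only [mul_assoc]
    have AB := A.symm.trans B
    have AB1 := mul_right_cancel AB
    rw [mul_assoc, mul_assoc] at AB1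
    exact mul_left_cancel AB1
  have hp : (u*h)*((u*h)⁻¹*p*(u*h))*(u*h)⁻¹ = p := by group
  have hq : (u*h)*((u*h)⁻¹*q*(u*h))*(u*h)⁻¹ = q := by group
  have hk := key ((u*h)⁻¹*p*(u*h)) ((u*h)⁻¹*q*(u*h))
  rwa [hp, hq] at hk

lemma wedge_pow_central_right {z : G} (hz : z ∈ Subgroup.center G) (x : G) (j : ℕ) :
    wedge x (z ^ j) = (wedge x z) ^ j := by
  induction j with
  | zero => rw [pow_zero, pow_zero, wedge_one_right]
  | succ m ih => rw [pow_succ', C2 hz, ih, pow_succ']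

lemma wedge_pow_central_left {z : G} (hz : z ∈ Subgroup.center G) (x : G) (j : ℕ) :
    wedge (x ^ j) z = (wedge x z) ^ j := by
  induction j with
  | zero => rw [pow_zero, pow_zero, wedge_one_left]
  | succ m ih =>
      have h := L1 x (x ^ m) z
      rw [show x * x ^ m * x⁻¹ = x ^ m from by
            rw [← pow_succ', pow_succ, mul_inv_cancel_right],
          central_conj' hz, ih] at h
      rw [pow_succ', h, pow_succ]

include hc in
lemma wedge_pow_formula (x h : G) (m : ℕ) :
    wedge (x ^ m) h
      = (wedge x (x * h * x⁻¹ * h⁻¹)) ^ (m.choose 2) * (wedge x h) ^ m := by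
  induction m with
  | zero => rw [pow_zero, wedge_one_left, Nat.choose, pow_zero, pow_zero, one_mul]
  | succ m ih =>
      have h1 := L1 x (x ^ m) h
      rw [show x * x ^ m * x⁻¹ = x ^ m from by
            rw [← pow_succ', pow_succ, mul_inv_cancel_right]] at h1
      rw [show x * h * x⁻¹ = (x * h * x⁻¹ * h⁻¹) * h from by group,
          C2 (hc x h), wedge_pow_central_left (hc x h), ih] at h1
      rw [pow_succ' x m, h1]
      rw [show (m + 1).choose 2 = m + m.choose 2 from by
            rw [Nat.choose_succ_succ, Nat.choose_one_right],
          pow_add, pow_succ]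
      simp only [mul_assoc]

include hc in
lemma commute_wedge_pi (g h : G) (f : FreeGroup (G × G)) :
    Commute (wedge g h) (ExpAux.piE G f) := by
  induction f using FreeGroup.induction_on with
  | C1 => exact Commute.one_right _
  | of x =>
      show Commute (wedge g h) (piE G (FreeGroup.of x))
      rw [show piE G (FreeGroup.of x) = wedge x.1 x.2 from rfl]
      exact wedge_mul_comm hc g h x.1 x.2
  | inv_of x ih => rw [map_inv]; exact ih.inv_right
  | mul a b iha ihb => rw [map_mul]; exact iha.mul_right ihb

include hc in
lemma commute_pi_pi (f f' : FreeGroup (G × G)) :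
    Commute (ExpAux.piE G f) (ExpAux.piE G f') := by
  induction f using FreeGroup.induction_on with
  | C1 => exact Commute.one_left _
  | of x =>
      show Commute (piE G (FreeGroup.of x)) (piE G f')
      rw [show piE G (FreeGroup.of x) = wedge x.1 x.2 from rfl]
      exact commute_wedge_pi hc x.1 x.2 f'
  | inv_of x ih => rw [map_inv]; exact ih.inv_left
  | mul a b iha ihb => rw [map_mul]; exact iha.mul_left ihb

end Class2

end ExpAux

/-- For a finite `p`-group of nilpotency class at most 2 (i.e. `[G,G] ≤ Z(G)`) with
`p` odd, `exp(G ∧ G) ∣ exp G`, and consequently `exp(M(G)) ∣ exp G`. -/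
theorem exponent_extSquare_dvd_of_class_two (G : Type*) [Group G] [Finite G]
    (p : ℕ) (hp : p.Prime) (hodd : p ≠ 2) (hpG : IsPGroup p G)
    (hclass : commutator G ≤ Subgroup.center G)
    (κ : ExtSquare G →* G) (hκ : ∀ g h : G, κ (wedge g h) = g * h * g⁻¹ * h⁻¹) :
    Monoid.exponent (ExtSquare G) ∣ Monoid.exponent G ∧
      Monoid.exponent κ.ker ∣ Monoid.exponent G := by
  classical
  -- class ≤ 2 : commutators are central
  have hc : ∀ u x : G, u * x * u⁻¹ * x⁻¹ ∈ Subgroup.center G := by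
    intro u x
    open scoped commutatorElement in
    have h1 : ⁅u, x⁆ ∈ ⁅(⊤ : Subgroup G), (⊤ : Subgroup G)⁆ :=
      Subgroup.commutator_mem_commutator (Subgroup.mem_top u) (Subgroup.mem_top x)
    rw [commutatorElement_def] at h1
    exact hclass (by rw [commutator_def]; exact h1)
  set n := Monoid.exponent G with hn
  have hxn : ∀ x : G, x ^ n = 1 := fun x => Monoid.pow_exponent_eq_one x
  -- n is odd
  haveI : Fact p.Prime := ⟨hp⟩
  obtain ⟨m, hm⟩ := IsPGroup.iff_card.mp hpG
  have hdvd : n ∣ p ^ m := hm ▸ Group.exponent_dvd_nat_card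
  obtain ⟨j, _, hnj⟩ := (Nat.dvd_prime_pow hp).mp hdvd
  have hoddn : Odd n := hnj ▸ (hp.odd_of_ne_two hodd).pow
  have h2 : 2 ∣ n - 1 := (Nat.Odd.sub_odd hoddn odd_one).two_dvd
  have hch : n.choose 2 = n * ((n - 1) / 2) := by
    rw [Nat.choose_two_right, Nat.mul_div_assoc _ h2]
  -- generators of the exterior square have order dividing n
  have hgen : ∀ g h : G, (wedge g h) ^ n = 1 := by
    intro g h
    have hf := ExpAux.wedge_pow_formula hc g h n
    rw [hxn g, ExpAux.wedge_one_left] at hf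
    have hk1 : (wedge g (g * h * g⁻¹ * h⁻¹)) ^ (n.choose 2) = 1 := by
      rw [hch, pow_mul, ← ExpAux.wedge_pow_central_right (hc g h), hxn,
        ExpAux.wedge_one_right, one_pow]
    rw [hk1, one_mul] at hf
    exact hf.symm
  -- all elements have order dividing n
  have hfree : ∀ f : FreeGroup (G × G), (ExpAux.piE G f) ^ n = 1 := by
    intro f
    induction f using FreeGroup.induction_on with
    | C1 => rw [map_one, one_pow]
    | of x =>
        show (ExpAux.piE G (FreeGroup.of x)) ^ n = 1
        rw [show ExpAux.piE G (FreeGroup.of x) = wedge x.1 x.2 from rfl]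
        exact hgen x.1 x.2
    | inv_of x ih => rw [map_inv, inv_pow, ih, inv_one]
    | mul a b iha ihb =>
        rw [map_mul, (ExpAux.commute_pi_pi hc a b).mul_pow, iha, ihb, one_mul]
  have hall : ∀ t : ExtSquare G, t ^ n = 1 := by
    intro t
    obtain ⟨f, rfl⟩ := ExpAux.piE_surjective G t
    exact hfree f
  refine ⟨Monoid.exponent_dvd_of_forall_pow_eq_one hall, ?_⟩
  refine Monoid.exponent_dvd_of_forall_pow_eq_one fun x => ?_
  exact Subtype.ext (by rw [SubgroupClass.coe_pow, OneMemClass.coe_one]; exact hall x)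
end

section
/- For any group G, the subgroup M₀(G) of G ∧ G generated by all elements x ∧ y with xy = yx is an abelian subgroup contained in the center of G ∧ G, and its exponent divides exp(G) when G is finite. -/
namespace TensorAux

variable {G : Type*} [Group G]

lemma mk_rel {r : FreeGroup (G × G)} (hr : r ∈ tensorRels G) :
    PresentedGroup.mk (tensorRels G) r = 1 := by
  exact (QuotientGroup.eq_one_iff r).mpr (Subgroup.subset_normalClosure hr)

lemma trel1 (g g' h : G) :
    tensorOf (g * g') h = tensorOf (g * g' * g⁻¹) (g * h * g⁻¹) * tensorOf g h := by
  have hr : (FreeGroup.of (g * g', h) *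
      (FreeGroup.of (g * g' * g⁻¹, g * h * g⁻¹) * FreeGroup.of (g, h))⁻¹) ∈ tensorRels G :=
    Or.inl ⟨g, g', h, rfl⟩
  have h1 := mk_rel hr
  rw [map_mul, map_inv, mul_inv_eq_one] at h1
  exact h1

lemma trel2 (g h h' : G) :
    tensorOf g (h * h') = tensorOf g h * tensorOf (h * g * h⁻¹) (h * h' * h⁻¹) := by
  have hr : (FreeGroup.of (g, h * h') *
      (FreeGroup.of (g, h) * FreeGroup.of (h * g * h⁻¹, h * h' * h⁻¹))⁻¹) ∈ tensorRels G :=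
    Or.inr ⟨g, h, h', rfl⟩
  have h1 := mk_rel hr
  rw [map_mul, map_inv, mul_inv_eq_one] at h1
  exact h1

/-- The conjugation action of `G` on `G ⊗ G`. -/
def alpha (g : G) : TensorSquare G →* TensorSquare G :=
  PresentedGroup.toGroup
    (f := fun p : G × G => tensorOf (g * p.1 * g⁻¹) (g * p.2 * g⁻¹)) (by
    rintro r (⟨x, y, h, rfl⟩ | ⟨x, y, h, rfl⟩) <;>
      simp only [map_mul, map_inv, FreeGroup.lift_apply_of, mul_inv_eq_one]
    · rw [show g * (x * y) * g⁻¹ = (g * x * g⁻¹) * (g * y * g⁻¹) by group]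
      rw [trel1 (g * x * g⁻¹) (g * y * g⁻¹) (g * h * g⁻¹)]
      congr 2 <;> group
    · rw [show g * (y * h) * g⁻¹ = (g * y * g⁻¹) * (g * h * g⁻¹) by group]
      rw [trel2 (g * x * g⁻¹) (g * y * g⁻¹) (g * h * g⁻¹)]
      congr 2 <;> group)

@[simp] lemma alpha_of (g a b : G) :
    alpha g (tensorOf a b) = tensorOf (g * a * g⁻¹) (g * b * g⁻¹) :=
  PresentedGroup.toGroup.of _

lemma hom_ext {H : Type*} [Group H] {φ ψ : TensorSquare G →* H}
    (h : ∀ a b : G, φ (tensorOf a b) = ψ (tensorOf a b)) : φ = ψ :=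
  PresentedGroup.ext fun x => h x.1 x.2

lemma alpha_mul (g g' : G) (t : TensorSquare G) :
    alpha (g * g') t = alpha g (alpha g' t) := by
  have : (alpha (g * g') : TensorSquare G →* TensorSquare G)
      = (alpha g).comp (alpha g') := by
    apply hom_ext
    intro a b
    simp only [alpha_of, MonoidHom.comp_apply]
    congr 1 <;> group
  rw [this]; rfl

lemma alpha_one (t : TensorSquare G) : alpha (1 : G) t = t := by
  have : (alpha (1 : G) : TensorSquare G →* TensorSquare G) = MonoidHom.id _ := by
    apply hom_ext
    intro a b
    simp [alpha_of]
  rw [this]; rfl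

lemma alpha_inv_cancel (g : G) (t : TensorSquare G) : alpha g⁻¹ (alpha g t) = t := by
  rw [← alpha_mul, inv_mul_cancel, alpha_one]

lemma alpha_cancel_inv (g : G) (t : TensorSquare G) : alpha g (alpha g⁻¹ t) = t := by
  rw [← alpha_mul, mul_inv_cancel, alpha_one]

/-- `κ : G ⊗ G → G`, `g ⊗ h ↦ [g,h]`. -/
def kappa : TensorSquare G →* G :=
  PresentedGroup.toGroup (f := fun p : G × G => p.1 * p.2 * p.1⁻¹ * p.2⁻¹) (by
    rintro r (⟨x, y, h, rfl⟩ | ⟨x, y, h, rfl⟩) <;>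
      simp only [map_mul, map_inv, FreeGroup.lift_apply_of] <;> group)

@[simp] lemma kappa_of (g h : G) : kappa (tensorOf g h) = g * h * g⁻¹ * h⁻¹ :=
  PresentedGroup.toGroup.of _

/-- Restated relation 1: `(xy) ⊗ z = ˣ(y ⊗ z) · (x ⊗ z)`. -/
lemma rel1' (x y z : G) :
    tensorOf (x * y) z = alpha x (tensorOf y z) * tensorOf x z := by
  rw [alpha_of]; exact trel1 x y z

/-- Restated relation 2: `x ⊗ (yz) = (x ⊗ y) · ʸ(x ⊗ z)`. -/
lemma rel2' (x y z : G) :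
    tensorOf x (y * z) = tensorOf x y * alpha y (tensorOf x z) := by
  rw [alpha_of]; exact trel2 x y z

lemma star (g h a b : G) :
    alpha g (alpha h (tensorOf a b)) * tensorOf g h
      = tensorOf g h * alpha h (alpha g (tensorOf a b)) := by
  have key : ∀ a : G,
      alpha g (alpha h (tensorOf (h * a * h⁻¹) b)) * tensorOf g h
        = tensorOf g h * alpha h (alpha g (tensorOf (h * a * h⁻¹) b)) := by
    intro a
    have w1 : tensorOf (g * (h * a * h⁻¹)) (h * b)
        = alpha g (tensorOf (h * a * h⁻¹) h) *
            (alpha g (alpha h (tensorOf (h * a * h⁻¹) b)) *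
              (tensorOf g h * alpha h (tensorOf g b))) := by
      rw [rel1' g (h * a * h⁻¹) (h * b), rel2' (h * a * h⁻¹) h b, rel2' g h b,
        map_mul]
      simp only [mul_assoc]
    have w2 : tensorOf (g * (h * a * h⁻¹)) (h * b)
        = alpha g (tensorOf (h * a * h⁻¹) h) *
            (tensorOf g h *
              (alpha h (alpha g (tensorOf (h * a * h⁻¹) b)) * alpha h (tensorOf g b))) := by
      rw [rel2' (g * (h * a * h⁻¹)) h b, rel1' g (h * a * h⁻¹) h, rel1' g (h * a * h⁻¹) b,
        map_mul]
      simp only [mul_assoc]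
    have e := mul_left_cancel (w1.symm.trans w2)
    rw [← mul_assoc, ← mul_assoc] at e
    exact mul_right_cancel e
  have := key (h⁻¹ * a * h)
  rwa [show h * (h⁻¹ * a * h) * h⁻¹ = a by group] at this

lemma star_all (g h : G) (t : TensorSquare G) :
    alpha g (alpha h t) * tensorOf g h = tensorOf g h * alpha h (alpha g t) := by
  have : ((MulAut.conj (tensorOf g h : TensorSquare G))⁻¹).toMonoidHom.comp
        ((alpha g).comp (alpha h))
      = (alpha h).comp (alpha g) := by
    apply hom_ext
    intro a b
    have hs := star g h a b
    simp only [MonoidHom.comp_apply, MulEquiv.coe_toMonoidHom, MulAut.conj_inv_apply]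
    rw [mul_assoc, hs]
    group
  have h2 := congrArg (fun φ : TensorSquare G →* TensorSquare G => φ t) this
  simp only [MonoidHom.comp_apply, MulEquiv.coe_toMonoidHom, MulAut.conj_inv_apply] at h2
  calc alpha g (alpha h t) * tensorOf g h
      = tensorOf g h * ((tensorOf g h)⁻¹ * alpha g (alpha h t) * tensorOf g h) := by group
    _ = tensorOf g h * alpha h (alpha g t) := by rw [h2]

/-- The subgroup of elements `t` with `t s t⁻¹ = α (κ t) s`. -/
def conjGood : Subgroup (TensorSquare G) where
  carrier := {t | ∀ s, t * s * t⁻¹ = alpha (kappa t) s}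
  one_mem' := by
    intro s
    simp [alpha_one]
  mul_mem' := by
    intro t t' ht ht' s
    have : t * t' * s * (t * t')⁻¹ = t * (t' * s * t'⁻¹) * t⁻¹ := by group
    rw [this, ht', ht, map_mul, alpha_mul]
  inv_mem' := by
    intro t ht s
    have h1 := ht (t⁻¹ * s * t)
    have h2 : t * (t⁻¹ * s * t) * t⁻¹ = s := by group
    rw [h2] at h1
    have h3 := congrArg (alpha (kappa t)⁻¹) h1
    rw [alpha_inv_cancel] at h3
    rw [map_inv]
    have : t⁻¹ * s * t⁻¹⁻¹ = t⁻¹ * s * t := by group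
    rw [this, ← h3]

lemma conj_formula (t s : TensorSquare G) : t * s * t⁻¹ = alpha (kappa t) s := by
  refine PresentedGroup.generated_by _ conjGood ?_ t s
  rintro ⟨g, h⟩ s
  show tensorOf g h * s * (tensorOf g h)⁻¹ = alpha (kappa (tensorOf g h)) s
  rw [kappa_of]
  have hs := star_all g h (alpha g⁻¹ (alpha h⁻¹ s))
  rw [alpha_cancel_inv, alpha_cancel_inv] at hs
  rw [show g * h * g⁻¹ * h⁻¹ = g * (h * (g⁻¹ * h⁻¹)) by group,
    alpha_mul, alpha_mul, alpha_mul]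
  rw [← hs]
  group

lemma central_of_kappa_one {t : TensorSquare G} (h : kappa t = 1) (s : TensorSquare G) :
    t * s = s * t := by
  have := conj_formula t s
  rw [h, alpha_one] at this
  calc t * s = t * s * t⁻¹ * t := by group
    _ = s * t := by rw [this]

/-- The projection `G ⊗ G → G ∧ G`. -/
def piExt (G : Type*) [Group G] : TensorSquare G →* ExtSquare G :=
  QuotientGroup.mk' (Subgroup.normalClosure (nablaSet G))

lemma piExt_tensorOf (g h : G) : piExt G (tensorOf g h) = wedge g h := rfl

lemma piExt_surjective : Function.Surjective (piExt G) :=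
  QuotientGroup.mk'_surjective _

lemma wedge_central {x y : G} (h : x * y = y * x) (z : ExtSquare G) :
    z * wedge x y = wedge x y * z := by
  obtain ⟨s, rfl⟩ := piExt_surjective z
  have hk : kappa (tensorOf x y) = 1 := by
    rw [kappa_of, h]; group
  have := central_of_kappa_one hk s
  rw [← piExt_tensorOf, ← map_mul, ← map_mul, this]

lemma tensorOf_one_left (y : G) : tensorOf (1 : G) y = 1 := by
  have := rel1' (1 : G) 1 y
  rw [one_mul, alpha_one] at this
  exact (right_eq_mul.mp this)

lemma tensorOf_pow {x y : G} (h : x * y = y * x) (k : ℕ) :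
    tensorOf (x ^ k) y = (tensorOf x y) ^ k := by
  induction k with
  | zero => simp [tensorOf_one_left]
  | succ k ih =>
    have h1 := rel1' x (x ^ k) y
    rw [alpha_of, show x * x ^ k * x⁻¹ = x ^ k by group,
      show x * y * x⁻¹ = y by rw [h]; group] at h1
    rw [pow_succ' x k, h1, ih, ← pow_succ]

lemma wedge_pow_exp {x y : G} (h : x * y = y * x) :
    (wedge x y) ^ Monoid.exponent G = 1 := by
  rw [show (wedge x y : ExtSquare G) = piExt G (tensorOf x y) from rfl, ← map_pow,
    ← tensorOf_pow h, Monoid.pow_exponent_eq_one, tensorOf_one_left, map_one]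

end TensorAux

/-- `M₀(G)` is contained in the center of `G ∧ G`, is abelian, and its exponent
divides `exp G` when `G` is finite. -/
theorem M0_central_abelian_exponent (G : Type*) [Group G] :
    M0 G ≤ Subgroup.center (ExtSquare G) ∧
      (∀ a b : ExtSquare G, a ∈ M0 G → b ∈ M0 G → a * b = b * a) ∧
      (Finite G → Monoid.exponent (M0 G) ∣ Monoid.exponent G) := by
  classical
  set n := Monoid.exponent G with hn
  -- the subgroup of central elements killed by `n`
  let H : Subgroup (ExtSquare G) :=
    { carrier := {t | t ∈ Subgroup.center (ExtSquare G) ∧ t ^ n = 1}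
      one_mem' := ⟨Subgroup.one_mem _, one_pow n⟩
      mul_mem' := by
        rintro a b ⟨ha, ha'⟩ ⟨hb, hb'⟩
        refine ⟨Subgroup.mul_mem _ ha hb, ?_⟩
        have hcomm : Commute a b := (Subgroup.mem_center_iff.mp ha b).symm
        rw [hcomm.mul_pow, ha', hb', one_mul]
      inv_mem' := by
        rintro a ⟨ha, ha'⟩
        exact ⟨Subgroup.inv_mem _ ha, by rw [inv_pow, ha', inv_one]⟩ }
  have hM0H : M0 G ≤ H := by
    apply Subgroup.closure_le H |>.mpr
    rintro t ⟨x, y, hxy, rfl⟩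
    exact ⟨Subgroup.mem_center_iff.mpr (TensorAux.wedge_central hxy),
      TensorAux.wedge_pow_exp hxy⟩
  have hcenter : M0 G ≤ Subgroup.center (ExtSquare G) := fun t ht => (hM0H ht).1
  refine ⟨hcenter, ?_, ?_⟩
  · intro a b ha _
    exact (Subgroup.mem_center_iff.mp (hcenter ha) b).symm
  · intro _
    refine Monoid.exponent_dvd_iff_forall_pow_eq_one.mpr ?_
    rintro ⟨t, ht⟩
    have := (hM0H ht).2
    ext
    push_cast
    simpa using this
end
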